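/- A spacetime with an ordered foliation satisfying the causality condition cannot be compact. -/

import Mathlib

/-- A spacetime with an ordered foliation satisfying the causality
condition cannot be compact.  Here `JplusS p` denotes `J^+(Σ_p)`, the causal future
of the leaf through `p`.  These sets are open, they cover `M`, the events are
chronologically ordered, `J^+(Σ_q) ⊆ J^+(Σ_p)` whenever `q ∈ J^+(Σ_p)`, and
`p ∉ J^+(Σ_p)`; hence no finite subcollection can cover `M`, so `M` is not compact. -/
theorem stmt_5 {M : Type*} [TopologicalSpace M] [Nonempty M]
    (JplusS : M → Set M)
    (hopen : ∀ p, IsOpen (JplusS p))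
    (hcover : ∀ q : M, ∃ p : M, q ∈ JplusS p)
    (hmono : ∀ p q, q ∈ JplusS p → JplusS q ⊆ JplusS p)
    (hirr : ∀ p, p ∉ JplusS p)
    (htotal : ∀ p q, p ∈ JplusS q ∨ q ∈ JplusS p ∨ JplusS p = JplusS q) :
    ¬ CompactSpace M := by
  intro hc
  obtain ⟨s, hs⟩ := IsCompact.elim_finite_subcover (isCompact_univ (X := M))
    JplusS hopen (fun q _ => Set.mem_iUnion.mpr (hcover q))
  -- find a maximal element of s
  classical
  have hmax : ∀ t : Finset M, t.Nonempty → ∃ p ∈ t, ∀ q ∈ t, JplusS q ⊆ JplusS p := by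
    intro t
    induction t using Finset.induction with
    | empty => intro h; exact absurd h (by simp)
    | insert a u hnotin ih =>
      intro _
      by_cases hu : u.Nonempty
      · obtain ⟨p, hp, hpmax⟩ := ih hu
        rcases htotal a p with h | h | h
        · exact ⟨p, Finset.mem_insert_of_mem hp, fun q hq => by
            rcases Finset.mem_insert.mp hq with rfl | hq
            · exact hmono _ _ h
            · exact hpmax q hq⟩
        · exact ⟨a, Finset.mem_insert_self a u, fun q hq => by
            rcases Finset.mem_insert.mp hq with rfl | hq
            · exact le_refl _
            · exact (hpmax q hq).trans (hmono _ _ h)⟩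
        · exact ⟨a, Finset.mem_insert_self a u, fun q hq => by
            rcases Finset.mem_insert.mp hq with rfl | hq
            · exact le_refl _
            · exact (hpmax q hq).trans h.ge⟩
      · rw [Finset.not_nonempty_iff_eq_empty] at hu
        subst hu
        exact ⟨a, Finset.mem_insert_self a _, fun q hq => by
          simp at hq; subst hq; exact le_refl _⟩
  have hsne : s.Nonempty := by
    by_contra h
    rw [Finset.not_nonempty_iff_eq_empty] at h
    obtain ⟨x⟩ := ‹Nonempty M›
    have := hs (Set.mem_univ x)
    simp [h] at this
  obtain ⟨p, hp, hpmax⟩ := hmax s hsne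
  have : p ∈ ⋃ i ∈ s, JplusS i := hs (Set.mem_univ p)
  obtain ⟨q, hq, hpq⟩ := Set.mem_iUnion₂.mp this
  exact hirr p (hpmax q hq hpq)
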